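/- For τ > 0 and a matrix Y ∈ ℝ^{m×n} with SVD Y = U diag(σ₁,…,σ_r) Vᵀ, the matrix X★ = U diag((σ₁−τ)₊,…,(σ_r−τ)₊) Vᵀ is the unique minimizer of X ↦ τ‖X‖_* + (1/2)‖X − Y‖_F², where ‖·‖_* is the nuclear norm and (x)₊ = max(x,0). -/

import Mathlib

open Matrix BigOperators Finset

/-- The nuclear norm of a real matrix: the sum of the square roots of the
eigenvalues of AᵀA (i.e. the sum of the singular values of A). -/
noncomputable def nuclearNormR {m n : ℕ} (A : Matrix (Fin m) (Fin n) ℝ) : ℝ :=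
  ∑ i, Real.sqrt ((show (Aᵀ * A).IsHermitian by
    rw [Matrix.IsHermitian, Matrix.conjTranspose_eq_transpose_of_trivial, Matrix.transpose_mul,
      Matrix.transpose_transpose]).eigenvalues i)

namespace SVT
variable {m n r : ℕ}

lemma herm_tm (A : Matrix (Fin m) (Fin n) ℝ) : (Aᵀ * A).IsHermitian := by
  rw [Matrix.IsHermitian, Matrix.conjTranspose_eq_transpose_of_trivial, Matrix.transpose_mul,
    Matrix.transpose_transpose]

lemma ct_eq (A : Matrix (Fin m) (Fin n) ℝ) : Aᴴ = Aᵀ :=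
  Matrix.conjTranspose_eq_transpose_of_trivial A

lemma spectral_pkg (X : Matrix (Fin m) (Fin n) ℝ) :
    ∃ Q : Matrix (Fin n) (Fin n) ℝ, Qᵀ * Q = 1 ∧ Q * Qᵀ = 1 ∧
      Qᵀ * (Xᵀ * X) * Q
        = Matrix.diagonal ((SVT.herm_tm X).eigenvalues) := by
  set hH := SVT.herm_tm X with hhH
  refine ⟨(hH.eigenvectorUnitary : Matrix (Fin n) (Fin n) ℝ), ?_, ?_, ?_⟩
  · rw [← ct_eq, ← Matrix.star_eq_conjTranspose]
    exact (Unitary.mem_iff.mp hH.eigenvectorUnitary.2).1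
  · rw [← ct_eq (hH.eigenvectorUnitary : Matrix (Fin n) (Fin n) ℝ), ← Matrix.star_eq_conjTranspose]
    exact (Unitary.mem_iff.mp hH.eigenvectorUnitary.2).2
  · have h : star (hH.eigenvectorUnitary : Matrix (Fin n) (Fin n) ℝ) * (Xᵀ * X) *
        (hH.eigenvectorUnitary : Matrix (Fin n) (Fin n) ℝ)
        = Matrix.diagonal (RCLike.ofReal ∘ hH.eigenvalues) := by
      have := hH.conjStarAlgAut_star_eigenvectorUnitary
      rwa [Unitary.conjStarAlgAut_star_apply] at this
    rw [Matrix.star_eq_conjTranspose, ct_eq] at h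
    rw [h, RCLike.ofReal_real_eq_id]
    rfl

lemma col_sq_sum (A : Matrix (Fin m) (Fin n) ℝ) (j : Fin n) :
    ∑ a, A a j ^ 2 = (Aᵀ * A) j j := by
  rw [Matrix.mul_apply]
  exact Finset.sum_congr rfl fun a _ => by rw [Matrix.transpose_apply]; ring

lemma row_sq_sum (A : Matrix (Fin m) (Fin n) ℝ) (i : Fin m) :
    ∑ j, A i j ^ 2 = (A * Aᵀ) i i := by
  rw [Matrix.mul_apply]
  exact Finset.sum_congr rfl fun a _ => by rw [Matrix.transpose_apply]; ring


/-- Cauchy–Schwarz with square roots. -/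
lemma cs {ι : Type*} [Fintype ι] (f g : ι → ℝ) :
    ∑ i, f i * g i ≤ Real.sqrt (∑ i, f i ^ 2) * Real.sqrt (∑ i, g i ^ 2) := by
  have h := Finset.sum_mul_sq_le_sq_mul_sq Finset.univ f g
  calc ∑ i, f i * g i ≤ |∑ i, f i * g i| := le_abs_self _
    _ = Real.sqrt ((∑ i, f i * g i) ^ 2) := (Real.sqrt_sq_eq_abs _).symm
    _ ≤ Real.sqrt ((∑ i, f i ^ 2) * ∑ i, g i ^ 2) := Real.sqrt_le_sqrt h
    _ = _ := Real.sqrt_mul (by positivity) _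

lemma trace_form (A B : Matrix (Fin m) (Fin n) ℝ) :
    Matrix.trace (Aᵀ * B) = ∑ a, ∑ b, A a b * B a b := by
  simp only [Matrix.trace, Matrix.diag, Matrix.mul_apply, Matrix.transpose_apply]
  exact Finset.sum_comm

lemma diag_sandwich {k : ℕ} (M : Matrix (Fin n) (Fin k) ℝ) (d : Fin k → ℝ) (j : Fin n) :
    (M * Matrix.diagonal d * Mᵀ) j j = ∑ i, d i * M j i ^ 2 := by
  rw [Matrix.mul_apply]
  exact Finset.sum_congr rfl fun i _ => by
    rw [Matrix.mul_diagonal, Matrix.transpose_apply]; ring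

lemma proj_le_one (V : Matrix (Fin n) (Fin r) ℝ) (hV : Vᵀ * V = 1)
    (Q : Matrix (Fin n) (Fin n) ℝ) (hQ : Qᵀ * Q = 1) (j : Fin n) :
    (Qᵀ * (V * Vᵀ) * Q) j j ≤ 1 := by
  set M : Matrix (Fin n) (Fin n) ℝ := 1 - V * Vᵀ with hM
  have hMt : Mᵀ = M := by
    simp [hM, Matrix.transpose_sub, Matrix.transpose_mul]
  have hMM : M * M = M := by
    simp only [hM, Matrix.sub_mul, Matrix.mul_sub, Matrix.one_mul, Matrix.mul_one]
    have : V * Vᵀ * (V * Vᵀ) = V * Vᵀ := by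
      calc V * Vᵀ * (V * Vᵀ) = V * (Vᵀ * V) * Vᵀ := by
            rw [Matrix.mul_assoc, Matrix.mul_assoc, Matrix.mul_assoc]
        _ = V * Vᵀ := by rw [hV, Matrix.mul_one]
    rw [this]; abel
  have key : (Qᵀ * M * Q) j j = ∑ a, ((M * Q) a j) ^ 2 := by
    have h2 : Qᵀ * M * Q = (M * Q)ᵀ * (M * Q) := by
      rw [Matrix.transpose_mul, hMt, ← Matrix.mul_assoc, Matrix.mul_assoc Qᵀ M M, hMM]
    rw [h2, ← col_sq_sum]
  have h0 : 0 ≤ (Qᵀ * M * Q) j j := key ▸ Finset.sum_nonneg fun a _ => sq_nonneg _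
  have hsplit : (Qᵀ * M * Q) j j = 1 - (Qᵀ * (V * Vᵀ) * Q) j j := by
    have h3 : Qᵀ * M * Q = Qᵀ * Q - Qᵀ * (V * Vᵀ) * Q := by
      simp [hM, Matrix.mul_sub, Matrix.sub_mul, Matrix.mul_one]
    rw [h3, hQ, Matrix.sub_apply, Matrix.one_apply_eq]
  linarith [hsplit ▸ h0]

lemma WtW (U : Matrix (Fin m) (Fin r) ℝ) (V : Matrix (Fin n) (Fin r) ℝ)
    (c : Fin r → ℝ) (hU : Uᵀ * U = 1) :
    (U * Matrix.diagonal c * Vᵀ)ᵀ * (U * Matrix.diagonal c * Vᵀ)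
      = V * Matrix.diagonal (fun i => c i * c i) * Vᵀ := by
  rw [Matrix.transpose_mul, Matrix.transpose_mul, Matrix.transpose_transpose,
    Matrix.diagonal_transpose]
  calc Vᵀᵀ * (Matrix.diagonal c * Uᵀ) * (U * Matrix.diagonal c * Vᵀ)
      = V * (Matrix.diagonal c * ((Uᵀ * U) * (Matrix.diagonal c * Vᵀ))) := by
        rw [Matrix.transpose_transpose]
        simp only [Matrix.mul_assoc]
    _ = V * Matrix.diagonal (fun i => c i * c i) * Vᵀ := by
        rw [hU, Matrix.one_mul, ← Matrix.mul_assoc (Matrix.diagonal c),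
          Matrix.diagonal_mul_diagonal, ← Matrix.mul_assoc]

lemma dual_le (X : Matrix (Fin m) (Fin n) ℝ) (U : Matrix (Fin m) (Fin r) ℝ)
    (V : Matrix (Fin n) (Fin r) ℝ) (c : Fin r → ℝ) (t : ℝ)
    (hU : Uᵀ * U = 1) (hV : Vᵀ * V = 1)
    (hc0 : ∀ i, 0 ≤ c i) (hct : ∀ i, c i ≤ t) (ht : 0 ≤ t) :
    ∑ a, ∑ b, (U * Matrix.diagonal c * Vᵀ) a b * X a b ≤ t * nuclearNormR X := by
  obtain ⟨Q, hQ1, hQ2, hspec⟩ := spectral_pkg X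
  set W := U * Matrix.diagonal c * Vᵀ with hW
  set eig := (SVT.herm_tm X).eigenvalues with heigdef
  have heig : ∀ j, 0 ≤ eig j := fun j =>
    Matrix.eigenvalues_conjTranspose_mul_self_nonneg X j
  have hXQ : ∀ j, ∑ a, (X * Q) a j ^ 2 = eig j := by
    intro j
    rw [col_sq_sum]
    have h2 : (X * Q)ᵀ * (X * Q) = Qᵀ * (Xᵀ * X) * Q := by
      rw [Matrix.transpose_mul, Matrix.mul_assoc, ← Matrix.mul_assoc Xᵀ X Q,
        ← Matrix.mul_assoc]
    rw [h2, hspec, Matrix.diagonal_apply_eq]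
  have hWQ : ∀ j, ∑ a, (W * Q) a j ^ 2 ≤ t ^ 2 := by
    intro j
    rw [col_sq_sum]
    have h2 : (W * Q)ᵀ * (W * Q) = Qᵀ * (Wᵀ * W) * Q := by
      rw [Matrix.transpose_mul, Matrix.mul_assoc, ← Matrix.mul_assoc Wᵀ W Q,
        ← Matrix.mul_assoc]
    have h3 : Qᵀ * (Wᵀ * W) * Q
        = (Qᵀ * V) * Matrix.diagonal (fun i => c i * c i) * (Qᵀ * V)ᵀ := by
      rw [hW, WtW U V c hU, Matrix.transpose_mul, Matrix.transpose_transpose]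
      simp only [Matrix.mul_assoc]
    rw [h2, h3, diag_sandwich]
    have hproj : ((Qᵀ * V) * (Qᵀ * V)ᵀ) j j ≤ 1 := by
      have h4 : (Qᵀ * V) * (Qᵀ * V)ᵀ = Qᵀ * (V * Vᵀ) * Q := by
        rw [Matrix.transpose_mul, Matrix.transpose_transpose]
        simp only [Matrix.mul_assoc]
      rw [h4]; exact proj_le_one V hV Q hQ1 j
    rw [← row_sq_sum] at hproj
    calc ∑ i, c i * c i * (Qᵀ * V) j i ^ 2
        ≤ ∑ i, t ^ 2 * (Qᵀ * V) j i ^ 2 := by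
          refine Finset.sum_le_sum fun i _ => ?_
          have : c i * c i ≤ t ^ 2 := by nlinarith [hc0 i, hct i]
          nlinarith [sq_nonneg ((Qᵀ * V) j i)]
      _ = t ^ 2 * ∑ i, (Qᵀ * V) j i ^ 2 := by rw [Finset.mul_sum]
      _ ≤ t ^ 2 * 1 := by nlinarith [sq_nonneg t]
      _ = t ^ 2 := mul_one _
  calc ∑ a, ∑ b, W a b * X a b
      = Matrix.trace (Wᵀ * X) := (trace_form W X).symm
    _ = Matrix.trace ((W * Q)ᵀ * (X * Q)) := by
        rw [Matrix.transpose_mul W Q, Matrix.mul_assoc Qᵀ Wᵀ (X * Q),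
          ← Matrix.mul_assoc Wᵀ X Q, Matrix.trace_mul_comm Qᵀ (Wᵀ * X * Q),
          Matrix.mul_assoc (Wᵀ * X) Q Qᵀ, hQ2, Matrix.mul_one]
    _ = ∑ j, ∑ a, (W * Q) a j * (X * Q) a j := by
        rw [trace_form]; exact Finset.sum_comm
    _ ≤ ∑ j, t * Real.sqrt (eig j) := by
        refine Finset.sum_le_sum fun j _ => ?_
        calc ∑ a, (W * Q) a j * (X * Q) a j
            ≤ Real.sqrt (∑ a, (W * Q) a j ^ 2) * Real.sqrt (∑ a, (X * Q) a j ^ 2) :=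
              cs _ _
          _ ≤ t * Real.sqrt (eig j) := by
              rw [hXQ j]
              refine mul_le_mul_of_nonneg_right ?_ (Real.sqrt_nonneg _)
              calc Real.sqrt (∑ a, (W * Q) a j ^ 2)
                  ≤ Real.sqrt (t ^ 2) := Real.sqrt_le_sqrt (hWQ j)
                _ = t := Real.sqrt_sq ht
    _ = t * nuclearNormR X := by rw [← Finset.mul_sum]; rfl

lemma bessel {N M : ℕ} (u : Fin M → ℝ) (p : Fin N → Fin M → ℝ) (ε : Fin N → ℝ)
    (hgram : ∀ j k, ∑ a, p j a * p k a = if j = k then ε j else 0)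
    (hε : ∀ j, ε j ≤ 1) :
    ∑ j, (∑ a, u a * p j a) ^ 2 ≤ ∑ a, u a ^ 2 := by
  set c : Fin N → ℝ := fun j => ∑ a, u a * p j a with hc
  have hA : ∑ a, u a * (∑ j, c j * p j a) = ∑ j, c j ^ 2 := by
    simp_rw [Finset.mul_sum]
    rw [Finset.sum_comm]
    refine Finset.sum_congr rfl fun j _ => ?_
    have : ∀ a, u a * (c j * p j a) = c j * (u a * p j a) := fun a => by ring
    rw [Finset.sum_congr rfl fun a _ => this a, ← Finset.mul_sum]
    have hcc : ∑ a, u a * p j a = c j := rfl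
    rw [hcc]; ring
  have hB : ∑ a, (∑ j, c j * p j a) ^ 2 = ∑ j, c j ^ 2 * ε j := by
    have e1 : ∀ a, (∑ j, c j * p j a) ^ 2
        = ∑ j, ∑ k, (c j * c k) * (p j a * p k a) := by
      intro a
      rw [sq, Finset.sum_mul_sum]
      exact Finset.sum_congr rfl fun j _ => Finset.sum_congr rfl fun k _ => by ring
    rw [Finset.sum_congr rfl fun a _ => e1 a, Finset.sum_comm]
    refine Finset.sum_congr rfl fun j _ => ?_
    rw [Finset.sum_comm]
    have e2 : ∀ k, ∑ a, (c j * c k) * (p j a * p k a)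
        = (c j * c k) * (if j = k then ε j else 0) := by
      intro k
      rw [← Finset.mul_sum, hgram]
    rw [Finset.sum_congr rfl fun k _ => e2 k, Finset.sum_eq_single j]
    · simp [sq]
    · intro k _ hk
      have : ¬ (j = k) := fun h => hk h.symm
      simp [this]
    · intro h; exact absurd (Finset.mem_univ j) h
  have h0 : 0 ≤ ∑ a, (u a - ∑ j, c j * p j a) ^ 2 :=
    Finset.sum_nonneg fun a _ => sq_nonneg _
  have hexp : ∑ a, (u a - ∑ j, c j * p j a) ^ 2
      = ∑ a, u a ^ 2 - 2 * ∑ j, c j ^ 2 + ∑ j, c j ^ 2 * ε j := by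
    have e3 : ∀ a, (u a - ∑ j, c j * p j a) ^ 2
        = u a ^ 2 - 2 * (u a * (∑ j, c j * p j a)) + (∑ j, c j * p j a) ^ 2 :=
      fun a => by ring
    rw [Finset.sum_congr rfl fun a _ => e3 a]
    rw [Finset.sum_add_distrib, Finset.sum_sub_distrib, ← Finset.mul_sum, hA, hB]
  have hle : ∑ j, c j ^ 2 * ε j ≤ ∑ j, c j ^ 2 :=
    Finset.sum_le_sum fun j _ => by nlinarith [sq_nonneg (c j), hε j]
  have := hexp ▸ h0
  linarith

lemma nn_le (U : Matrix (Fin m) (Fin r) ℝ) (V : Matrix (Fin n) (Fin r) ℝ) (d : Fin r → ℝ)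
    (hU : Uᵀ * U = 1) (hV : Vᵀ * V = 1) (hd : ∀ i, 0 ≤ d i) :
    nuclearNormR (U * Matrix.diagonal d * Vᵀ) ≤ ∑ i, d i := by
  set X := U * Matrix.diagonal d * Vᵀ with hX
  obtain ⟨Q, hQ1, hQ2, hspec⟩ := spectral_pkg X
  unfold nuclearNormR
  set eig := (SVT.herm_tm X).eigenvalues with heigdef
  have heig : ∀ j, 0 ≤ eig j := fun j =>
    Matrix.eigenvalues_conjTranspose_mul_self_nonneg X j
  have hgramX : ∀ j k, ∑ a, (X * Q) a j * (X * Q) a k = if j = k then eig j else 0 := by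
    intro j k
    have e1 : ∑ a, (X * Q) a j * (X * Q) a k = ((X * Q)ᵀ * (X * Q)) j k := by
      rw [Matrix.mul_apply]
      exact Finset.sum_congr rfl fun a _ => by rw [Matrix.transpose_apply]
    have e2 : (X * Q)ᵀ * (X * Q) = Qᵀ * (Xᵀ * X) * Q := by
      rw [Matrix.transpose_mul, Matrix.mul_assoc, ← Matrix.mul_assoc Xᵀ X Q,
        ← Matrix.mul_assoc]
    rw [e1, e2, hspec, Matrix.diagonal_apply]
  set s : Fin n → ℝ := fun j => Real.sqrt (eig j) with hs
  set p : Fin n → Fin m → ℝ :=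
    fun j a => if eig j = 0 then 0 else (X * Q) a j / s j with hp
  have hps : ∀ j k, ∑ a, p j a * p k a
      = if j = k then (if eig j = 0 then 0 else 1) else 0 := by
    intro j k
    by_cases hj : eig j = 0
    · simp [hp, hj]
    · by_cases hk : eig k = 0
      · have hjk : j ≠ k := fun h => hj (h ▸ hk)
        simp [hp, hj, hk, hjk]
      · have e1 : ∑ a, p j a * p k a
            = (∑ a, (X * Q) a j * (X * Q) a k) / (s j * s k) := by
          rw [Finset.sum_div]
          refine Finset.sum_congr rfl fun a _ => ?_
          simp only [hp, if_neg hj, if_neg hk]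
          rw [div_mul_div_comm]
        rw [e1, hgramX]
        by_cases hjk : j = k
        · subst hjk
          have hss : s j * s j = eig j := Real.mul_self_sqrt (heig j)
          simp only [if_pos rfl, if_neg hj, hss]
          exact div_self hj
        · simp [hjk]
  have hsumS : ∀ j, s j = ∑ a, p j a * (X * Q) a j := by
    intro j
    by_cases hj : eig j = 0
    · simp [hp, hj, hs]
    · have e1 : ∑ a, p j a * (X * Q) a j
          = (∑ a, (X * Q) a j * (X * Q) a j) / s j := by
        rw [Finset.sum_div]
        refine Finset.sum_congr rfl fun a _ => ?_
        simp only [hp, if_neg hj]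
        rw [div_mul_eq_mul_div]
      rw [e1]
      have := hgramX j j
      rw [if_pos rfl] at this
      rw [this, hs]
      exact (Real.div_sqrt).symm
  -- the b coefficients
  have hbessel : ∀ i : Fin r, ∑ j, (∑ a, U a i * p j a) ^ 2 ≤ 1 := by
    intro i
    have h1 : ∑ a, (U a i) ^ 2 = 1 := by
      have : ∑ a, (U a i) ^ 2 = (Uᵀ * U) i i := col_sq_sum U i
      rw [this, hU, Matrix.one_apply_eq]
    calc ∑ j, (∑ a, U a i * p j a) ^ 2
        ≤ ∑ a, (U a i) ^ 2 :=
          bessel (fun a => U a i) p (fun j => if eig j = 0 then 0 else 1) hps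
            (fun j => by split <;> norm_num)
      _ = 1 := h1
  have hvq : ∀ i : Fin r, ∑ j, ((Vᵀ * Q) i j) ^ 2 = 1 := by
    intro i
    rw [row_sq_sum]
    have e1 : (Vᵀ * Q) * (Vᵀ * Q)ᵀ = Vᵀ * V := by
      rw [Matrix.transpose_mul, Matrix.transpose_transpose, Matrix.mul_assoc,
        ← Matrix.mul_assoc Q Qᵀ V, hQ2, Matrix.one_mul]
    rw [e1, hV, Matrix.one_apply_eq]
  have hXQapp : ∀ a j, (X * Q) a j = ∑ i, U a i * (d i * (Vᵀ * Q) i j) := by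
    intro a j
    have e1 : X * Q = U * (Matrix.diagonal d * (Vᵀ * Q)) := by
      rw [hX]; simp only [Matrix.mul_assoc]
    rw [e1, Matrix.mul_apply]
    exact Finset.sum_congr rfl fun i _ => by rw [Matrix.diagonal_mul]
  calc ∑ j, Real.sqrt (eig j) = ∑ j, ∑ a, p j a * (X * Q) a j :=
        Finset.sum_congr rfl fun j _ => hsumS j
    _ = ∑ j, ∑ a, ∑ i, p j a * (U a i * (d i * (Vᵀ * Q) i j)) := by
        refine Finset.sum_congr rfl fun j _ => Finset.sum_congr rfl fun a _ => ?_
        rw [hXQapp, Finset.mul_sum]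
    _ = ∑ j, ∑ i, ∑ a, p j a * (U a i * (d i * (Vᵀ * Q) i j)) :=
        Finset.sum_congr rfl fun j _ => Finset.sum_comm
    _ = ∑ i, ∑ j, ∑ a, p j a * (U a i * (d i * (Vᵀ * Q) i j)) := Finset.sum_comm
    _ = ∑ i, d i * ∑ j, (Vᵀ * Q) i j * (∑ a, U a i * p j a) := by
        refine Finset.sum_congr rfl fun i _ => ?_
        rw [Finset.mul_sum]
        refine Finset.sum_congr rfl fun j _ => ?_
        rw [Finset.mul_sum, Finset.mul_sum]
        exact Finset.sum_congr rfl fun a _ => by ring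
    _ ≤ ∑ i, d i * 1 := by
        refine Finset.sum_le_sum fun i _ => ?_
        refine mul_le_mul_of_nonneg_left ?_ (hd i)
        calc ∑ j, (Vᵀ * Q) i j * (∑ a, U a i * p j a)
            ≤ Real.sqrt (∑ j, ((Vᵀ * Q) i j) ^ 2)
              * Real.sqrt (∑ j, (∑ a, U a i * p j a) ^ 2) := cs _ _
          _ ≤ 1 := by
              rw [hvq i]
              rw [Real.sqrt_one, one_mul]
              calc Real.sqrt (∑ j, (∑ a, U a i * p j a) ^ 2)
                  ≤ Real.sqrt 1 := Real.sqrt_le_sqrt (hbessel i)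
                _ = 1 := Real.sqrt_one
    _ = ∑ i, d i := by simp

lemma inner_diag (U : Matrix (Fin m) (Fin r) ℝ) (V : Matrix (Fin n) (Fin r) ℝ)
    (c e : Fin r → ℝ) (hU : Uᵀ * U = 1) (hV : Vᵀ * V = 1) :
    ∑ x, ∑ y, (U * Matrix.diagonal c * Vᵀ) x y * (U * Matrix.diagonal e * Vᵀ) x y
      = ∑ i, c i * e i := by
  rw [← trace_form]
  have h1 : (U * Matrix.diagonal c * Vᵀ)ᵀ * (U * Matrix.diagonal e * Vᵀ)
      = V * Matrix.diagonal (fun i => c i * e i) * Vᵀ := by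
    rw [Matrix.transpose_mul, Matrix.transpose_mul, Matrix.transpose_transpose,
      Matrix.diagonal_transpose]
    calc Vᵀᵀ * (Matrix.diagonal c * Uᵀ) * (U * Matrix.diagonal e * Vᵀ)
        = V * (Matrix.diagonal c * ((Uᵀ * U) * (Matrix.diagonal e * Vᵀ))) := by
          rw [Matrix.transpose_transpose]
          simp only [Matrix.mul_assoc]
      _ = V * Matrix.diagonal (fun i => c i * e i) * Vᵀ := by
          rw [hU, Matrix.one_mul, ← Matrix.mul_assoc (Matrix.diagonal c),
            Matrix.diagonal_mul_diagonal, ← Matrix.mul_assoc]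
  rw [h1, Matrix.trace_mul_cycle, hV, Matrix.one_mul, Matrix.trace_diagonal]

end SVT

/-- Singular value thresholding: given an SVD Y = U diag(σ) Vᵀ, the matrix
U diag((σ−τ)₊) Vᵀ is the unique minimizer of X ↦ τ‖X‖_* + ½‖X−Y‖_F². -/
theorem stmt8 {m n r : ℕ} (τ : ℝ) (hτ : 0 < τ)
    (Y : Matrix (Fin m) (Fin n) ℝ) (U : Matrix (Fin m) (Fin r) ℝ)
    (V : Matrix (Fin n) (Fin r) ℝ) (σ : Fin r → ℝ)
    (hU : Uᵀ * U = 1) (hV : Vᵀ * V = 1) (hσ : ∀ i, 0 ≤ σ i)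
    (hY : Y = U * Matrix.diagonal σ * Vᵀ) :
    (∀ X : Matrix (Fin m) (Fin n) ℝ,
      τ * nuclearNormR (U * Matrix.diagonal (fun i => max (σ i - τ) 0) * Vᵀ) +
          (∑ a, ∑ b, ((U * Matrix.diagonal (fun i => max (σ i - τ) 0) * Vᵀ) a b - Y a b) ^ 2) / 2
        ≤ τ * nuclearNormR X + (∑ a, ∑ b, (X a b - Y a b) ^ 2) / 2) ∧
    (∀ X : Matrix (Fin m) (Fin n) ℝ,
      τ * nuclearNormR X + (∑ a, ∑ b, (X a b - Y a b) ^ 2) / 2 =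
          τ * nuclearNormR (U * Matrix.diagonal (fun i => max (σ i - τ) 0) * Vᵀ) +
            (∑ a, ∑ b, ((U * Matrix.diagonal (fun i => max (σ i - τ) 0) * Vᵀ) a b - Y a b) ^ 2) / 2
        → X = U * Matrix.diagonal (fun i => max (σ i - τ) 0) * Vᵀ) := by

  set d : Fin r → ℝ := fun i => max (σ i - τ) 0 with hd
  set c : Fin r → ℝ := fun i => min (σ i) τ with hc
  set Xs := U * Matrix.diagonal d * Vᵀ with hXs
  set W := U * Matrix.diagonal c * Vᵀ with hW
  have hd0 : ∀ i, 0 ≤ d i := fun i => le_max_right _ _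
  have hc0 : ∀ i, 0 ≤ c i := fun i => le_min (hσ i) hτ.le
  have hcτ : ∀ i, c i ≤ τ := fun i => min_le_right _ _
  have hdc : ∀ i, d i + c i = σ i := by
    intro i
    rcases le_total (σ i) τ with h | h
    · simp only [hd, hc, max_eq_right (by linarith : σ i - τ ≤ 0), min_eq_left h, zero_add]
    · simp only [hd, hc, max_eq_left (by linarith : (0:ℝ) ≤ σ i - τ), min_eq_right h]
      ring
  have hcd : ∀ i, c i * d i = τ * d i := by
    intro i
    rcases le_total (σ i) τ with h | h
    · simp only [hd, hc, max_eq_right (by linarith : σ i - τ ≤ 0), mul_zero]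
    · simp only [hd, hc, min_eq_right h]
  have hYW : Y = Xs + W := by
    have hdiag : Matrix.diagonal d + Matrix.diagonal c = Matrix.diagonal σ := by
      rw [Matrix.diagonal_add]
      exact congrArg Matrix.diagonal (funext hdc)
    rw [hY, ← hdiag, hXs, hW, Matrix.mul_add, Matrix.add_mul]
  have hYab : ∀ a b, Y a b = Xs a b + W a b := fun a b => by rw [hYW]; rfl
  have hWXs : ∑ x, ∑ y, W x y * Xs x y = τ * ∑ i, d i := by
    rw [hW, hXs, SVT.inner_diag U V c d hU hV,
      Finset.sum_congr rfl fun i _ => hcd i, ← Finset.mul_sum]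
  have hNNXs : nuclearNormR Xs ≤ ∑ i, d i := SVT.nn_le U V d hU hV hd0
  have hdual : ∀ X : Matrix (Fin m) (Fin n) ℝ,
      ∑ x, ∑ y, W x y * X x y ≤ τ * nuclearNormR X := fun X =>
    SVT.dual_le X U V c τ hU hV hc0 hcτ hτ.le
  have hkey : ∀ X : Matrix (Fin m) (Fin n) ℝ,
      τ * nuclearNormR Xs + (∑ a, ∑ b, (Xs a b - Y a b) ^ 2) / 2
          + (∑ a, ∑ b, (X a b - Xs a b) ^ 2) / 2
        ≤ τ * nuclearNormR X + (∑ a, ∑ b, (X a b - Y a b) ^ 2) / 2 := by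
    intro X
    have hexp : ∑ a, ∑ b, (X a b - Y a b) ^ 2
        = (∑ a, ∑ b, (X a b - Xs a b) ^ 2) - 2 * (∑ a, ∑ b, W a b * X a b)
          + 2 * (∑ a, ∑ b, W a b * Xs a b) + ∑ a, ∑ b, (Xs a b - Y a b) ^ 2 := by
      calc ∑ a, ∑ b, (X a b - Y a b) ^ 2
          = ∑ a, ∑ b, ((X a b - Xs a b) ^ 2 - 2 * (W a b * X a b)
              + 2 * (W a b * Xs a b) + (Xs a b - Y a b) ^ 2) := by
            refine Finset.sum_congr rfl fun a _ => Finset.sum_congr rfl fun b _ => ?_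
            rw [hYab a b]; ring
        _ = _ := by
            simp only [Finset.sum_add_distrib, Finset.sum_sub_distrib, ← Finset.mul_sum]
    have h1 := hdual X
    have h2 : τ * nuclearNormR Xs ≤ τ * ∑ i, d i :=
      mul_le_mul_of_nonneg_left hNNXs hτ.le
    rw [hexp]
    linarith [hWXs]
  constructor
  · intro X
    have hk := hkey X
    have hQ0 : 0 ≤ ∑ a, ∑ b, (X a b - Xs a b) ^ 2 :=
      Finset.sum_nonneg fun a _ => Finset.sum_nonneg fun b _ => sq_nonneg _
    linarith
  · intro X heq
    have hk := hkey X
    have hQ0 : 0 ≤ ∑ a, ∑ b, (X a b - Xs a b) ^ 2 :=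
      Finset.sum_nonneg fun a _ => Finset.sum_nonneg fun b _ => sq_nonneg _
    have hQz : ∑ a, ∑ b, (X a b - Xs a b) ^ 2 = 0 := by linarith
    ext a b
    have hrow : ∀ a' ∈ Finset.univ, ∑ b', (X a' b' - Xs a' b') ^ 2 = 0 :=
      (Finset.sum_eq_zero_iff_of_nonneg fun a' _ =>
        Finset.sum_nonneg fun b' _ => sq_nonneg _).mp hQz
    have hent : ∀ b' ∈ Finset.univ, (X a b' - Xs a b') ^ 2 = 0 :=
      (Finset.sum_eq_zero_iff_of_nonneg fun b' _ => sq_nonneg _).mp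
        (hrow a (Finset.mem_univ a))
    have := hent b (Finset.mem_univ b)
    have := pow_eq_zero_iff (n := 2) (by norm_num) |>.mp this
    linarith [sub_eq_zero.mp this]
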